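/- Let L be a finite geometric lattice of rank r with the minimal labeling λ induced by a linear order on its atoms, and let (λ_1, …, λ_r) be the label sequence of the unique ascending chain of L. Then for every permutation σ ∈ S_r, the rearranged sequence (λ_{σ(1)}, …, λ_{σ(r)}) is the label sequence of some maximal chain of L; indeed it is the label sequence of the maximal chain ⊥ ⋖ λ_{σ(1)} ⋖ λ_{σ(1)} ∨ λ_{σ(2)} ⋖ ⋯ ⋖ λ_{σ(1)} ∨ ⋯ ∨ λ_{σ(r)} = ⊤. -/

import Mathlib

/-- A finite bounded lattice is *geometric* if it is atomistic (every element is a join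
of atoms) and semimodular (whenever distinct `y`, `y'` both cover `x`, the join `y ⊔ y'`
covers both). -/
def IsGeometricLattice (L : Type*) [Lattice L] [BoundedOrder L] : Prop :=
  (∀ x : L, ∃ s : Finset L, (∀ a ∈ s, IsAtom a) ∧ s.sup id = x) ∧
  (∀ x y y' : L, y ≠ y' → x ⋖ y → x ⋖ y' → y ⋖ (y ⊔ y') ∧ y' ⋖ (y ⊔ y'))

/-- `lab` is the minimal labeling induced by the linear order on the atoms of `L`
represented by the function `f` (injective on atoms): for every cover relation `u ⋖ v`,
`lab u v` is the atom `a ≤ v` with `a ≰ u` having the least value of `f`. -/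
def IsMinimalLabeling {L : Type*} [Lattice L] [OrderBot L] (f : L → ℕ) (lab : L → L → L) : Prop :=
  ∀ u v : L, u ⋖ v →
    IsAtom (lab u v) ∧ lab u v ≤ v ∧ ¬ lab u v ≤ u ∧
    ∀ a : L, IsAtom a → a ≤ v → ¬ a ≤ u → f (lab u v) ≤ f a

/-- `g` is a maximal chain `⊥ = g 0 ⋖ g 1 ⋖ ⋯ ⋖ g r = ⊤`. -/
def IsMaxChainFun {L : Type*} [PartialOrder L] [BoundedOrder L] (r : ℕ)
    (g : Fin (r+1) → L) : Prop :=
  g 0 = ⊥ ∧ g (Fin.last r) = ⊤ ∧ ∀ i : Fin r, g i.castSucc ⋖ g i.succ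

/-- The label sequence of the maximal chain `g` with respect to the labeling `lab`. -/
def labelSeq {L : Type*} (lab : L → L → L) {r : ℕ} (g : Fin (r+1) → L) (i : Fin r) : L :=
  lab (g i.castSucc) (g i.succ)

section Aux
variable {L : Type*} [Lattice L] [Fintype L] [BoundedOrder L]

theorem myExistsCovby {x : L} (hx : x ≠ ⊥) : ∃ y : L, y ⋖ x := by
  have : IsStronglyCoatomic L := IsStronglyCoatomic.of_wellFounded_gt wellFounded_gt
  obtain ⟨y, -, hy⟩ := (bot_lt_iff_ne_bot.2 hx).exists_le_covby
  exact ⟨y, hy⟩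

theorem myCovbySupAtom
    (hsm : ∀ x y y' : L, y ≠ y' → x ⋖ y → x ⋖ y' → y ⋖ (y ⊔ y') ∧ y' ⋖ (y ⊔ y'))
    {a : L} (ha : IsAtom a) (x : L) (hax : ¬ a ≤ x) : x ⋖ x ⊔ a := by
  refine wellFounded_lt.induction (C := fun x : L => ¬ a ≤ x → x ⋖ x ⊔ a) x ?_ hax
  intro x IH hax
  rcases eq_or_ne x ⊥ with rfl | hxb
  · simpa [bot_covBy_iff] using ha
  · obtain ⟨y, hy⟩ := myExistsCovby hxb
    have hay : ¬ a ≤ y := fun h => hax (h.trans hy.le)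
    have h1 : y ⋖ y ⊔ a := IH y hy.lt hay
    have hne : x ≠ y ⊔ a := by rintro rfl; exact hax le_sup_right
    have h2 := (hsm y x (y ⊔ a) hne hy h1).1
    have : x ⊔ (y ⊔ a) = x ⊔ a := by
      rw [← sup_assoc, sup_eq_left.2 hy.le]
    rwa [this] at h2

theorem myExchange
    (hsm : ∀ x y y' : L, y ≠ y' → x ⋖ y → x ⋖ y' → y ⋖ (y ⊔ y') ∧ y' ⋖ (y ⊔ y'))
    {a b x : L} (ha : IsAtom a) (hb : IsAtom b) (hab : a ≤ x ⊔ b) (hax : ¬ a ≤ x) :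
    x ⊔ a = x ⊔ b := by
  have hbx : ¬ b ≤ x := fun h => hax (by simpa [sup_eq_left.2 h] using hab)
  have h1 : x ⋖ x ⊔ a := myCovbySupAtom hsm ha x hax
  have h2 : x ⋖ x ⊔ b := myCovbySupAtom hsm hb x hbx
  have hle : x ⊔ a ≤ x ⊔ b := sup_le le_sup_left hab
  rcases hle.lt_or_eq with h | h
  · exact absurd h (h2.2 h1.lt)
  · exact h

end Aux

/-- Let `(λ_1, …, λ_r)` be the label sequence of the unique ascending chain `C` of a
finite geometric lattice of rank `r` with a minimal labeling. For every permutation `σ`,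
the rearranged sequence `(λ_{σ(1)}, …, λ_{σ(r)})` is the label sequence of the maximal
chain of partial joins `⊥ ⋖ λ_{σ(1)} ⋖ λ_{σ(1)} ∨ λ_{σ(2)} ⋖ ⋯ ⋖ ⊤`. -/
theorem stmt9 (L : Type*) [Lattice L] [Fintype L] [BoundedOrder L] (r : ℕ)
    (hgeo : IsGeometricLattice L)
    (hrank : ∀ c : Set L, IsMaxChain (· ≤ ·) c → c.ncard = r + 1)
    (f : L → ℕ) (hf : Set.InjOn f {a : L | IsAtom a})
    (lab : L → L → L) (hlab : IsMinimalLabeling f lab)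
    (C : Fin (r+1) → L) (hC : IsMaxChainFun r C)
    (hCasc : Monotone fun i => f (labelSeq lab C i))
    (σ : Equiv.Perm (Fin r)) :
    ∃ M : Fin (r+1) → L, IsMaxChainFun r M ∧
      (∀ k : Fin (r+1),
        M k = (Finset.univ.filter fun i : Fin r => i.castSucc < k).sup
          fun i => labelSeq lab C (σ i)) ∧
      ∀ i : Fin r, labelSeq lab M i = labelSeq lab C (σ i) := by
  classical
  obtain ⟨-, hsm⟩ := hgeo
  set lam := labelSeq lab C with hlamdef
  obtain ⟨hC0, hCtop, hCcov⟩ := hC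
  have hlam : ∀ i : Fin r, IsAtom (lam i) ∧ lam i ≤ C i.succ ∧ ¬ lam i ≤ C i.castSucc ∧
      ∀ a : L, IsAtom a → a ≤ C i.succ → ¬ a ≤ C i.castSucc → f (lam i) ≤ f a :=
    fun i => hlab _ _ (hCcov i)
  have hCmono : StrictMono C := Fin.strictMono_iff_lt_succ.2 fun i => (hCcov i).lt
  have hltC : ∀ t m : Fin r, t < m → lam t ≤ C m.castSucc := by
    intro t m h
    exact (hlam t).2.1.trans (hCmono.monotone (by
      simp only [Fin.le_def, Fin.val_succ, Fin.coe_castSucc]; omega))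
  have hins : ∀ i : Fin r, (Finset.univ.filter fun t : Fin r => t.castSucc < i.succ)
      = insert i (Finset.univ.filter fun t : Fin r => t.castSucc < i.castSucc) := by
    intro i
    ext t
    simp only [Finset.mem_insert, Finset.mem_filter, Finset.mem_univ, true_and,
      Fin.castSucc_lt_succ_iff, Fin.castSucc_lt_castSucc_iff]
    constructor
    · intro h
      rcases h.lt_or_eq with h | h
      · exact Or.inr h
      · exact Or.inl h
    · rintro (rfl | h)
      · exact le_rfl
      · exact h.le
  have hCsup : ∀ k : Fin (r+1),
      C k = (Finset.univ.filter fun t : Fin r => t.castSucc < k).sup lam := by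
    intro k
    induction k using Fin.induction with
    | zero =>
      have he : (Finset.univ.filter fun t : Fin r => t.castSucc < (0 : Fin (r+1))) = ∅ := by
        apply Finset.filter_eq_empty_iff.2
        intro t _
        exact (Fin.not_lt_zero _)
      rw [he, Finset.sup_empty, hC0]
    | succ i ih =>
      rw [hins i, Finset.sup_insert, ← ih]
      have h1 := (hlam i).2.1
      have h2 := (hlam i).2.2.1
      have hlt : C i.castSucc < lam i ⊔ C i.castSucc := by
        rcases le_sup_right.lt_or_eq (a := C i.castSucc) (b := lam i ⊔ C i.castSucc) with h | h
        · exact h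
        · exact absurd (le_sup_left.trans h.ge) h2
      have hle : lam i ⊔ C i.castSucc ≤ C i.succ := sup_le h1 (hCcov i).le
      rcases hle.lt_or_eq with h | h
      · exact absurd h ((hCcov i).2 hlt)
      · exact h.symm
  have hstar : ∀ (k : Fin r) (a : L), IsAtom a → ¬ a ≤ C k.castSucc → f (lam k) ≤ f a := by
    intro k a ha hak
    have hne : (Finset.univ.filter fun n : Fin (r+1) => a ≤ C n).Nonempty :=
      ⟨Fin.last r, Finset.mem_filter.2 ⟨Finset.mem_univ _, by rw [hCtop]; exact le_top⟩⟩
    set n := Finset.min' _ hne with hn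
    have hnle : a ≤ C n := (Finset.mem_filter.1 (Finset.min'_mem _ hne)).2
    have hn0 : n ≠ 0 := by
      intro h
      rw [h, hC0] at hnle
      exact ha.1 (le_bot_iff.1 hnle)
    obtain ⟨m, hm⟩ := Fin.exists_succ_eq_of_ne_zero hn0
    have ham : ¬ a ≤ C m.castSucc := by
      intro h
      have hmem : m.castSucc ∈ Finset.univ.filter fun n : Fin (r+1) => a ≤ C n :=
        Finset.mem_filter.2 ⟨Finset.mem_univ _, h⟩
      have := Finset.min'_le _ _ hmem
      rw [← hn, ← hm] at this
      exact absurd this (Fin.castSucc_lt_succ : m.castSucc < m.succ).not_ge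
    have hasucc : a ≤ C m.succ := by rw [hm]; exact hnle
    have h1 : f (lam m) ≤ f a := (hlam m).2.2.2 a ha hasucc ham
    have hkm : k ≤ m := by
      by_contra h
      push_neg at h
      have hle' : (m.succ : Fin (r+1)) ≤ k.castSucc := by
        simp only [Fin.le_def, Fin.val_succ, Fin.coe_castSucc]
        exact h
      exact hak (hasucc.trans (hCmono.monotone hle'))
    exact le_trans (hCasc hkm) h1
  have hclaim2 : ∀ S : Finset (Fin r), ∀ j : Fin r, j ∉ S → ¬ lam j ≤ S.sup lam := by
    intro S
    induction S using Finset.strongInduction with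
    | _ S IH =>
      intro j hj hle
      rcases S.eq_empty_or_nonempty with rfl | hSne
      · rw [Finset.sup_empty] at hle
        exact (hlam j).1.1 (le_bot_iff.1 hle)
      set m := S.max' hSne with hmdef
      have hmS : m ∈ S := S.max'_mem hSne
      rcases lt_trichotomy m j with hmj | hmj | hmj
      · have : S.sup lam ≤ C j.castSucc :=
          Finset.sup_le fun t ht => hltC t j ((S.le_max' t ht).trans_lt hmj)
        exact (hlam j).2.2.1 (hle.trans this)
      · exact hj (hmj ▸ hmS)
      · have hjm : j ≠ m := hmj.ne
        have hS' : S.sup lam = lam m ⊔ (S.erase m).sup lam := by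
          conv_lhs => rw [← Finset.insert_erase hmS]
          rw [Finset.sup_insert]
        set x := (S.erase m).sup lam with hxdef
        have hjx : ¬ lam j ≤ x :=
          IH (S.erase m) (Finset.erase_ssubset hmS) j
            (fun h => hj (Finset.mem_of_mem_erase h))
        have hjxm : lam j ≤ x ⊔ lam m := by
          rw [sup_comm, ← hS']
          exact hle
        have hex : x ⊔ lam j = x ⊔ lam m :=
          myExchange hsm (hlam j).1 (hlam m).1 hjxm hjx
        have hmle : lam m ≤ x ⊔ lam j := by
          rw [hex]
          exact le_sup_right
        have hxle : x ⊔ lam j ≤ C m.castSucc := by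
          refine sup_le (Finset.sup_le fun t ht => ?_) (hltC j m hmj)
          have htm : t < m := lt_of_le_of_ne (S.le_max' t (Finset.mem_of_mem_erase ht))
            (Finset.ne_of_mem_erase ht)
          exact hltC t m htm
        exact (hlam m).2.2.1 (hmle.trans hxle)
  -- the chain M
  set M : Fin (r+1) → L := fun k =>
    (Finset.univ.filter fun t : Fin r => t.castSucc < k).sup fun t => lam (σ t) with hMdef
  have hMimage : ∀ k : Fin (r+1), M k =
      ((Finset.univ.filter fun t : Fin r => t.castSucc < k).image σ).sup lam := by
    intro k
    rw [hMdef, Finset.sup_image]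
    rfl
  have hMstep : ∀ i : Fin r, M i.succ = M i.castSucc ⊔ lam (σ i) := by
    intro i
    rw [hMdef]
    simp only
    rw [hins i, Finset.sup_insert, sup_comm]
  have hMnot : ∀ i : Fin r, ¬ lam (σ i) ≤ M i.castSucc := by
    intro i
    rw [hMimage]
    apply hclaim2
    intro h
    obtain ⟨t, ht, hts⟩ := Finset.mem_image.1 h
    have : t = i := σ.injective hts
    subst this
    exact absurd (Finset.mem_filter.1 ht).2 (lt_irrefl _)
  have hMcov : ∀ i : Fin r, M i.castSucc ⋖ M i.succ := by
    intro i
    rw [hMstep i]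
    exact myCovbySupAtom hsm (hlam (σ i)).1 _ (hMnot i)
  have hM0 : M 0 = ⊥ := by
    rw [hMdef]
    simp only
    have he : (Finset.univ.filter fun t : Fin r => t.castSucc < (0 : Fin (r+1))) = ∅ :=
      Finset.filter_eq_empty_iff.2 fun t _ => Fin.not_lt_zero _
    rw [he, Finset.sup_empty]
  have hMtop : M (Fin.last r) = ⊤ := by
    have hu : (Finset.univ.filter fun t : Fin r => t.castSucc < Fin.last r) = Finset.univ :=
      Finset.filter_true_of_mem fun t _ => Fin.castSucc_lt_last t
    rw [hMimage, hu, Finset.image_univ_of_surjective σ.surjective, ← hu, ← hCsup, hCtop]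
  refine ⟨M, ⟨hM0, hMtop, hMcov⟩, fun k => rfl, ?_⟩
  intro i
  obtain ⟨hb1, hb2, hb3, hb4⟩ := hlab _ _ (hMcov i)
  show lab (M i.castSucc) (M i.succ) = lam (σ i)
  set b := lab (M i.castSucc) (M i.succ) with hbdef
  have hfle : f b ≤ f (lam (σ i)) := by
    refine hb4 _ (hlam (σ i)).1 ?_ (hMnot i)
    rw [hMstep i]
    exact le_sup_right
  have hble : b ≤ M i.castSucc ⊔ lam (σ i) := by
    rw [← hMstep i]
    exact hb2
  have hbnotC : ¬ b ≤ C (σ i).castSucc := by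
    intro hbC
    have hex : M i.castSucc ⊔ b = M i.castSucc ⊔ lam (σ i) :=
      myExchange hsm hb1 (hlam (σ i)).1 hble hb3
    have hlamle : lam (σ i) ≤ M i.castSucc ⊔ b := by
      rw [hex]
      exact le_sup_right
    set S1 := (Finset.univ.filter fun t : Fin r => t.castSucc < i.castSucc).image σ with hS1
    set S2 := Finset.univ.filter fun t : Fin r => t.castSucc < (σ i).castSucc with hS2
    have hfin : lam (σ i) ≤ (S1 ∪ S2).sup lam := by
      rw [Finset.sup_union]
      refine hlamle.trans (sup_le ?_ ?_)
      · rw [hMimage]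
        exact le_sup_left
      · refine le_trans ?_ le_sup_right
        rw [hS2, ← hCsup]
        exact hbC
    refine hclaim2 (S1 ∪ S2) (σ i) ?_ hfin
    intro h
    rcases Finset.mem_union.1 h with h | h
    · obtain ⟨t, ht, hts⟩ := Finset.mem_image.1 h
      have : t = i := σ.injective hts
      subst this
      exact absurd (Finset.mem_filter.1 ht).2 (lt_irrefl _)
    · exact absurd (Finset.mem_filter.1 h).2 (lt_irrefl _)
  have hgle : f (lam (σ i)) ≤ f b := hstar (σ i) b hb1 hbnotC
  exact hf hb1 (hlam (σ i)).1 (le_antisymm hfle hgle)
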